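/- Let T be a finite tree on vertex set V, let c : V × V → ℝ≥0 be a cost function that is monotone non-decreasing with respect to the target, and let x : V × V → [0,1] be a function satisfying, for every pair v, w ∈ V, Σ_{u ∈ P(v,w)} min(x(u,v), x(u,w)) ≥ 1. Then there exists a query assignment Q : V → (finite subsets of V) such that for every v ∈ V, Σ_{q ∈ Q(v)} c(q,v) ≤ 2 · Σ_{u ∈ V} c(u,v) · x(u,v). In particular, for any weights w : V → ℝ≥0 the weighted average cost Σ_v w(v)·Σ_{q∈Q(v)} c(q,v) is at most 2·Σ_v w(v)·Σ_u c(u,v)·x(u,v), and the worst-case cost max_v Σ_{q∈Q(v)} c(q,v) is at most 2·max_v Σ_u c(u,v)·x(u,v). -/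

import Mathlib

open scoped Classical

/-- The vertex set of the unique path between `u` and `v` in a tree `G`
(stated via existence of a path containing the vertex, which in a tree is
the unique path). -/
def pathSet {V : Type*} (G : SimpleGraph V) (u v : V) : Set V :=
  {x | ∃ p : G.Path u v, x ∈ (p : G.Walk u v).support}

section Betweenness
variable {V : Type*} {G : SimpleGraph V} (hT : G.IsTree)
include hT

/-- canonical path -/
noncomputable def cpath (hT : G.IsTree) (u v : V) : G.Path u v :=
  (hT.isConnected u v).some.toPath

lemma mem_pathSet_iff (p : G.Path u v) {z : V} :
    z ∈ pathSet G u v ↔ z ∈ (p : G.Walk u v).support := by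
  constructor
  · rintro ⟨q, hq⟩
    rwa [hT.IsAcyclic.path_unique q p] at hq
  · intro h; exact ⟨p, h⟩

lemma pathSet_eq (p : G.Path u v) :
    pathSet G u v = {z | z ∈ (p : G.Walk u v).support} := by
  ext z; exact mem_pathSet_iff hT p

lemma start_mem_pathSet (u v : V) : u ∈ pathSet G u v :=
  ⟨cpath hT u v, (cpath hT u v).1.start_mem_support⟩

lemma end_mem_pathSet (u v : V) : v ∈ pathSet G u v :=
  ⟨cpath hT u v, (cpath hT u v).1.end_mem_support⟩

lemma pathSet_symm (u v : V) : pathSet G u v = pathSet G v u := by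
  ext z
  constructor
  · rintro ⟨p, hp⟩; exact ⟨p.reverse, by simpa [SimpleGraph.Walk.support_reverse] using hp⟩
  · rintro ⟨p, hp⟩; exact ⟨p.reverse, by simpa [SimpleGraph.Walk.support_reverse] using hp⟩

lemma pathSet_self (u : V) : pathSet G u u = {u} := by
  have h := pathSet_eq hT (⟨SimpleGraph.Walk.nil, SimpleGraph.Walk.IsPath.nil⟩ : G.Path u u)
  rw [h]; ext z; simp

lemma pathSet_adj {a b : V} (h : G.Adj a b) : pathSet G a b = {a, b} := by
  have hp : (SimpleGraph.Walk.cons h SimpleGraph.Walk.nil).IsPath := by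
    simp [SimpleGraph.Walk.cons_isPath_iff, h.ne]
  rw [pathSet_eq hT ⟨_, hp⟩]; ext z; simp

/-- prefix: if q on path u-v then P(u,q) ⊆ P(u,v) -/
lemma pathSet_subset_left {u v q : V} (h : q ∈ pathSet G u v) :
    pathSet G u q ⊆ pathSet G u v := by
  intro z hz
  set p := cpath hT u v
  have hq : q ∈ (p : G.Walk u v).support := (mem_pathSet_iff hT p).1 h
  have htp : ((p : G.Walk u v).takeUntil q hq).IsPath := p.2.takeUntil hq
  have hz' := (mem_pathSet_iff hT ⟨_, htp⟩).1 hz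
  exact ⟨p, (p : G.Walk u v).support_takeUntil_subset hq hz'⟩

lemma pathSet_subset_right {u v q : V} (h : q ∈ pathSet G u v) :
    pathSet G q v ⊆ pathSet G u v := by
  intro z hz
  set p := cpath hT u v
  have hq : q ∈ (p : G.Walk u v).support := (mem_pathSet_iff hT p).1 h
  have hdp : ((p : G.Walk u v).dropUntil q hq).IsPath := p.2.dropUntil hq
  have hz' := (mem_pathSet_iff hT ⟨_, hdp⟩).1 hz
  exact ⟨p, (p : G.Walk u v).support_dropUntil_subset hq hz'⟩

/-- L7: order on a path -/
lemma pathSet_split {a b m z : V} (hm : m ∈ pathSet G a b) (hz : z ∈ pathSet G a b) :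
    m ∈ pathSet G a z ∨ m ∈ pathSet G z b := by
  set p := cpath hT a b
  have hzs : z ∈ (p : G.Walk a b).support := (mem_pathSet_iff hT p).1 hz
  have hms : m ∈ (p : G.Walk a b).support := (mem_pathSet_iff hT p).1 hm
  rw [← (p : G.Walk a b).take_spec hzs, SimpleGraph.Walk.mem_support_append_iff] at hms
  rcases hms with h | h
  · exact Or.inl ⟨⟨_, p.2.takeUntil hzs⟩, h⟩
  · exact Or.inr ⟨⟨_, p.2.dropUntil hzs⟩, h⟩

/-- L4 intersection: P(a,q) ∩ P(q,b) = {q} when q between -/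
lemma pathSet_inter {a b q z : V} (hq : q ∈ pathSet G a b)
    (h1 : z ∈ pathSet G a q) (h2 : z ∈ pathSet G q b) : z = q := by
  set p := cpath hT a b
  have hqs : q ∈ (p : G.Walk a b).support := (mem_pathSet_iff hT p).1 hq
  have h1' : z ∈ ((p : G.Walk a b).takeUntil q hqs).support :=
    (mem_pathSet_iff hT ⟨_, p.2.takeUntil hqs⟩).1 h1
  have h2' : z ∈ ((p : G.Walk a b).dropUntil q hqs).support :=
    (mem_pathSet_iff hT ⟨_, p.2.dropUntil hqs⟩).1 h2
  -- use nodup of the whole support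
  have hnd : ((p : G.Walk a b).support).Nodup := p.2.support_nodup
  rw [← (p : G.Walk a b).take_spec hqs, SimpleGraph.Walk.support_append] at hnd
  have hdisj := List.disjoint_of_nodup_append hnd
  have hcons := ((p : G.Walk a b).dropUntil q hqs).support_eq_cons
  rw [hcons] at h2'
  rcases List.mem_cons.1 h2' with h | h
  · exact h
  · exact absurd h (hdisj h1')

/-- antisymmetry -/
lemma pathSet_antisymm {a b m : V} (hm : m ∈ pathSet G a b) (ha : a ∈ pathSet G m b) :
    a = m :=
  pathSet_inter hT hm (start_mem_pathSet hT a m) ha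

end Betweenness

section Geometry
variable {V : Type*} {G : SimpleGraph V} (hT : G.IsTree)
include hT

/-- G1: dichotomy at an edge -/
lemma edge_dichotomy {r1 r2 : V} (h : G.Adj r1 r2) (q : V) :
    r1 ∈ pathSet G r2 q ∨ r2 ∈ pathSet G r1 q := by
  set p := cpath hT r1 q
  by_cases hr2 : r2 ∈ (p : G.Walk r1 q).support
  · exact Or.inr ⟨p, hr2⟩
  · left
    have hp : (SimpleGraph.Walk.cons h.symm (p : G.Walk r1 q)).IsPath :=
      (SimpleGraph.Walk.cons_isPath_iff _ _).2 ⟨p.2, hr2⟩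
    exact ⟨⟨_, hp⟩, by simp⟩

/-- not both sides -/
lemma edge_not_both {r1 r2 q : V} (hne : r1 ≠ r2)
    (h1 : r1 ∈ pathSet G r2 q) (h2 : r2 ∈ pathSet G r1 q) : False := by
  have := pathSet_antisymm hT h2 h1
  exact hne this

/-- G2: same-side passage. -/
lemma side_pass {r1 r2 v q : V} (h : G.Adj r1 r2)
    (hv : r2 ∈ pathSet G r1 v) (hq : r1 ∈ pathSet G r2 q) :
    r1 ∈ pathSet G v q := by
  -- r1 ∉ P(r2,v), r2 ∉ P(r1,q)
  have hnv : r1 ∉ pathSet G r2 v := fun hc => edge_not_both hT h.ne hc hv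
  have hnq : r2 ∉ pathSet G r1 q := fun hc => edge_not_both hT h.ne hq hc
  -- disjointness of P(v,r2) and P(r1,q)
  have hdisj : ∀ z, z ∈ pathSet G v r2 → z ∈ pathSet G r1 q → False := by
    intro z hz1 hz2
    rcases edge_dichotomy hT h z with hz | hz
    · -- r1 ∈ P(r2,z); z ∈ P(v,r2) = P(r2,v)
      have : z ∈ pathSet G r2 v := by rwa [pathSet_symm hT] at hz1
      exact hnv (pathSet_subset_left hT this hz)
    · exact hnq (pathSet_subset_left hT hz2 hz)
  -- construct the path v → r2 → r1 → q
  set p1 := cpath hT v r2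
  set p2 := cpath hT r1 q
  have hW : ((p1 : G.Walk v r2).append
      (SimpleGraph.Walk.cons h.symm (p2 : G.Walk r1 q))).IsPath := by
    rw [SimpleGraph.Walk.isPath_def, SimpleGraph.Walk.support_append]
    have : (SimpleGraph.Walk.cons h.symm (p2 : G.Walk r1 q)).support.tail
        = (p2 : G.Walk r1 q).support := by simp
    rw [this]
    refine List.Nodup.append p1.2.support_nodup p2.2.support_nodup ?_
    intro z hz1 hz2
    exact hdisj z ⟨p1, hz1⟩ ⟨p2, hz2⟩
  refine ⟨⟨_, hW⟩, ?_⟩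
  rw [SimpleGraph.Walk.mem_support_append_iff]
  right; simp

end Geometry

section Components
variable {V : Type*} {G : SimpleGraph V}

/-- connectivity of a finite vertex set via walks staying inside -/
def ConnIn (G : SimpleGraph V) (C : Finset V) : Prop :=
  ∀ u ∈ C, ∀ v ∈ C, ∃ w : G.Walk u v, ∀ z ∈ w.support, z ∈ C

/-- component of v inside S -/
noncomputable def comp (G : SimpleGraph V) (S : Finset V) (v : V) : Finset V :=
  S.filter (fun u => ∃ w : G.Walk v u, ∀ z ∈ w.support, z ∈ S)

lemma comp_subset {S : Finset V} {v : V} : comp G S v ⊆ S := Finset.filter_subset _ _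

lemma mem_comp_self {S : Finset V} {v : V} (hv : v ∈ S) : v ∈ comp G S v := by
  refine Finset.mem_filter.2 ⟨hv, SimpleGraph.Walk.nil, ?_⟩
  intro z hz; simp at hz; rwa [hz]

lemma mem_comp_of_walk {S : Finset V} {v u : V} (hu : u ∈ S)
    (w : G.Walk v u) (hw : ∀ z ∈ w.support, z ∈ S) : u ∈ comp G S v :=
  Finset.mem_filter.2 ⟨hu, w, hw⟩

lemma support_mem_comp {S : Finset V} {v u : V}
    (w : G.Walk v u) (hw : ∀ z ∈ w.support, z ∈ S) {z : V} (hz : z ∈ w.support) :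
    z ∈ comp G S v := by
  refine Finset.mem_filter.2 ⟨hw z hz, w.takeUntil z hz, fun y hy => ?_⟩
  exact hw y (w.support_takeUntil_subset hz hy)

lemma connIn_comp {S : Finset V} {v : V} : ConnIn G (comp G S v) := by
  intro u1 h1 u2 h2
  obtain ⟨-, w1, hw1⟩ := Finset.mem_filter.1 h1
  obtain ⟨-, w2, hw2⟩ := Finset.mem_filter.1 h2
  refine ⟨w1.reverse.append w2, fun z hz => ?_⟩
  rw [SimpleGraph.Walk.mem_support_append_iff] at hz
  rcases hz with hz | hz
  · rw [SimpleGraph.Walk.support_reverse, List.mem_reverse] at hz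
    exact support_mem_comp w1 hw1 hz
  · exact support_mem_comp w2 hw2 hz

lemma comp_eq_of_walk {S : Finset V} {u v : V}
    (w : G.Walk u v) (hw : ∀ z ∈ w.support, z ∈ S) :
    comp G S u = comp G S v := by
  ext z
  simp only [comp, Finset.mem_filter]
  constructor
  · rintro ⟨hzS, w', hw'⟩
    refine ⟨hzS, w.reverse.append w', fun y hy => ?_⟩
    rw [SimpleGraph.Walk.mem_support_append_iff] at hy
    rcases hy with hy | hy
    · rw [SimpleGraph.Walk.support_reverse, List.mem_reverse] at hy; exact hw y hy
    · exact hw' y hy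
  · rintro ⟨hzS, w', hw'⟩
    refine ⟨hzS, w.append w', fun y hy => ?_⟩
    rw [SimpleGraph.Walk.mem_support_append_iff] at hy
    rcases hy with hy | hy
    · exact hw y hy
    · exact hw' y hy

/-- in a tree, paths between members of a ConnIn set stay inside -/
lemma pathSet_subset_of_connIn (hT : G.IsTree) {C : Finset V} (hC : ConnIn G C)
    {u v : V} (hu : u ∈ C) (hv : v ∈ C) : pathSet G u v ⊆ (C : Set V) := by
  intro z hz
  obtain ⟨w, hw⟩ := hC u hu v hv
  have : z ∈ w.bypass.support := by
    rwa [mem_pathSet_iff hT ⟨w.bypass, w.bypass_isPath⟩] at hz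
  exact hw z (w.support_bypass_subset this)

end Components

section Centroid
variable {V : Type*} [Fintype V] {G : SimpleGraph V} {x : V → V → ℝ}

/-- r is a fractional centroid of C -/
def CentW (G : SimpleGraph V) (x : V → V → ℝ) (C : Finset V) (r : V) : Prop :=
  r ∈ C ∧ ∀ v ∈ C, (1:ℝ)/2 ≤ ∑ q ∈ C.filter (fun q => r ∈ pathSet G v q), x q v

lemma x_self_ge_one (hT : G.IsTree)
    (hfeas : ∀ v w : V,
      1 ≤ ∑ u ∈ Finset.univ.filter (· ∈ pathSet G v w), min (x u v) (x u w))
    (v : V) : 1 ≤ x v v := by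
  have h := hfeas v v
  rw [pathSet_self hT] at h
  have : Finset.univ.filter (fun u => u ∈ ({v} : Set V)) = {v} := by
    ext z; simp
  rw [Finset.sum_filter] at h
  simpa using h

lemma pairwise_LP (hT : G.IsTree) (hx0 : ∀ u v, 0 ≤ x u v)
    (hfeas : ∀ v w : V,
      1 ≤ ∑ u ∈ Finset.univ.filter (· ∈ pathSet G v w), min (x u v) (x u w))
    {C : Finset V} (hC : ConnIn G C) {r1 r2 v1 v2 : V} (h : G.Adj r1 r2)
    (hv1 : v1 ∈ C) (hv2 : v2 ∈ C)
    (h12 : r2 ∈ pathSet G r1 v1) (h21 : r1 ∈ pathSet G r2 v2)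
    (hM1 : ∑ q ∈ C.filter (fun q => r1 ∈ pathSet G v1 q), x q v1 < 1/2)
    (hM2 : ∑ q ∈ C.filter (fun q => r2 ∈ pathSet G v2 q), x q v2 < 1/2) : False := by
  have hcover : ∀ q : V, r1 ∈ pathSet G v1 q ∨ r2 ∈ pathSet G v2 q := by
    intro q
    rcases edge_dichotomy hT h q with hq | hq
    · exact Or.inl (side_pass hT h h12 hq)
    · exact Or.inr (side_pass hT h.symm h21 hq)
  set F := Finset.univ.filter (· ∈ pathSet G v1 v2) with hF
  have hFC : ∀ q ∈ F, q ∈ C := by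
    intro q hq
    rw [hF, Finset.mem_filter] at hq
    exact pathSet_subset_of_connIn hT hC hv1 hv2 hq.2
  have key : ∑ q ∈ F, min (x q v1) (x q v2) < 1 := by
    have hsplit := Finset.sum_filter_add_sum_filter_not F
      (fun q => r1 ∈ pathSet G v1 q) (fun q => min (x q v1) (x q v2))
    calc ∑ q ∈ F, min (x q v1) (x q v2)
        = ∑ q ∈ F.filter (fun q => r1 ∈ pathSet G v1 q), min (x q v1) (x q v2)
          + ∑ q ∈ F.filter (fun q => ¬ r1 ∈ pathSet G v1 q), min (x q v1) (x q v2) :=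
          hsplit.symm
      _ ≤ ∑ q ∈ F.filter (fun q => r1 ∈ pathSet G v1 q), x q v1
          + ∑ q ∈ F.filter (fun q => ¬ r1 ∈ pathSet G v1 q), x q v2 := by
          gcongr with q hq q hq
          · exact min_le_left _ _
          · exact min_le_right _ _
      _ ≤ ∑ q ∈ C.filter (fun q => r1 ∈ pathSet G v1 q), x q v1
          + ∑ q ∈ C.filter (fun q => r2 ∈ pathSet G v2 q), x q v2 := by
          refine add_le_add ?_ ?_
          · refine Finset.sum_le_sum_of_subset_of_nonneg ?_ (fun q _ _ => hx0 q v1)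
            intro q hq
            rw [Finset.mem_filter] at hq ⊢
            exact ⟨hFC q hq.1, hq.2⟩
          · refine Finset.sum_le_sum_of_subset_of_nonneg ?_ (fun q _ _ => hx0 q v2)
            intro q hq
            rw [Finset.mem_filter] at hq ⊢
            rcases hcover q with hc | hc
            · exact absurd hc hq.2
            · exact ⟨hFC q hq.1, hc⟩
      _ < 1/2 + 1/2 := by linarith
      _ = 1 := by norm_num
  exact absurd (hfeas v1 v2) (by rw [hF] at key; exact not_le.2 key)

end Centroid

section CentroidExists
variable {V : Type*} [Fintype V] {G : SimpleGraph V} {x : V → V → ℝ}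

/-- second vertex on the path from r to v -/
lemma exists_second_vertex (hT : G.IsTree) {r v : V} (hne : r ≠ v) :
    ∃ n : V, G.Adj r n ∧ n ∈ pathSet G r v := by
  set p := cpath hT r v
  have hnn : ¬ (p : G.Walk r v).Nil := SimpleGraph.Walk.not_nil_of_ne hne
  obtain ⟨n, hadj, q, hq⟩ := SimpleGraph.Walk.not_nil_iff.1 hnn
  refine ⟨n, hadj, ⟨p, ?_⟩⟩
  rw [hq]
  simp [SimpleGraph.Walk.support_cons]

theorem centroid_exists (hT : G.IsTree) (hx0 : ∀ u v, 0 ≤ x u v)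
    (hfeas : ∀ v w : V,
      1 ≤ ∑ u ∈ Finset.univ.filter (· ∈ pathSet G v w), min (x u v) (x u w))
    {C : Finset V} (hC : ConnIn G C) (hne : C.Nonempty) :
    ∃ r, CentW G x C r := by
  by_contra hcon
  push_neg at hcon
  -- every r ∈ C fails
  have hfail : ∀ r ∈ C, ∃ v, v ∈ C ∧ v ≠ r ∧
      ∑ q ∈ C.filter (fun q => r ∈ pathSet G v q), x q v < 1/2 := by
    intro r hr
    obtain ⟨v, hv, hlt⟩ := by
      have := hcon r
      rw [CentW] at this
      push_neg at this
      exact this hr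
    refine ⟨v, hv, ?_, hlt⟩
    intro heq
    rw [heq] at hlt
    -- then the sum is at least x r r ≥ 1
    have hsub : ({r} : Finset V) ⊆ C.filter (fun q => r ∈ pathSet G r q) := by
      intro z hz
      simp only [Finset.mem_singleton] at hz
      rw [hz]
      exact Finset.mem_filter.2 ⟨hr, start_mem_pathSet hT r r⟩
    have h1 : (1:ℝ) ≤ ∑ q ∈ C.filter (fun q => r ∈ pathSet G r q), x q r := by
      calc (1:ℝ) ≤ x r r := x_self_ge_one hT hfeas r
        _ = ∑ q ∈ ({r} : Finset V), x q r := by rw [Finset.sum_singleton]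
        _ ≤ _ := Finset.sum_le_sum_of_subset_of_nonneg hsub (fun q _ _ => hx0 q r)
    linarith
  -- choose witnesses
  choose vw hvwC hvwne hM using hfail
  -- choose neighbor toward the witness
  have hnb : ∀ r (hr : r ∈ C), ∃ n : V, G.Adj r n ∧ n ∈ pathSet G r (vw r hr) ∧ n ∈ C := by
    intro r hr
    obtain ⟨n, hadj, hmem⟩ := exists_second_vertex hT (hvwne r hr).symm
    refine ⟨n, hadj, hmem, ?_⟩
    exact pathSet_subset_of_connIn hT hC hr (hvwC r hr) hmem
  choose nb hnbAdj hnbPath hnbC using hnb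
  -- Y r = side of nb r
  classical
  let Y : ∀ r, r ∈ C → Finset V := fun r hr => C.filter (fun q => nb r hr ∈ pathSet G r q)
  -- to use exists_min_image we need a function on V; attach
  obtain ⟨⟨r0, hr0⟩, -, hmin⟩ := Finset.exists_min_image C.attach
    (fun r => (Y r.1 r.2).card) (by
      obtain ⟨a, ha⟩ := hne
      exact ⟨⟨a, ha⟩, Finset.mem_attach _ _⟩)
  let r' := nb r0 hr0
  have hr'C : r' ∈ C := hnbC r0 hr0
  let v' := vw r' hr'C
  by_cases hcase : r0 ∈ pathSet G r' v'
  · -- pairwise contradiction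
    exact pairwise_LP hT hx0 hfeas hC (hnbAdj r0 hr0) (hvwC r0 hr0) (hvwC r' hr'C)
      (hnbPath r0 hr0) hcase (hM r0 hr0) (hM r' hr'C)
  · -- descent
    let n' := nb r' hr'C
    have hadj' : G.Adj r' n' := hnbAdj r' hr'C
    have hn'path : n' ∈ pathSet G r' v' := hnbPath r' hr'C
    have hn'ner0 : n' ≠ r0 := by
      intro h
      exact hcase (h ▸ hn'path)
    have hsub : Y r' hr'C ⊆ (Y r0 hr0).erase r' := by
      intro q hq
      rw [Finset.mem_filter] at hq
      obtain ⟨hqC, hqP⟩ := hq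
      have hqner' : q ≠ r' := by
        rintro rfl
        rw [pathSet_self hT] at hqP
        exact hadj'.ne ((by simpa using hqP : n' = r').symm)
      refine Finset.mem_erase.2 ⟨hqner', Finset.mem_filter.2 ⟨hqC, ?_⟩⟩
      -- show r' ∈ pathSet G r0 q
      rcases edge_dichotomy hT (hnbAdj r0 hr0) q with hd | hd
      · -- r0 ∈ pathSet r' q : derive contradiction
        exfalso
        -- both r0 and n' on P(r', q)
        rcases pathSet_split hT hd hqP with h7 | h7
        · -- r0 ∈ P(r', n') = {r', n'}
          rw [pathSet_adj hT hadj'] at h7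
          rcases h7 with h7 | h7
          · exact (hnbAdj r0 hr0).ne h7
          · exact hn'ner0 h7.symm
        · -- r0 ∈ P(n', q)
          rcases edge_dichotomy hT hadj' r0 with h8 | h8
          · -- r' ∈ P(n', r0) ⊆ P(n', q), then r' = n'
            have h9 : r' ∈ pathSet G n' q := pathSet_subset_left hT h7 h8
            have := pathSet_inter hT hqP (start_mem_pathSet hT r' n') h9
            exact hadj'.ne this
          · -- n' ∈ P(r', r0) = {r', r0}
            rw [pathSet_adj hT ((hnbAdj r0 hr0).symm)] at h8
            rcases h8 with h8 | h8
            · exact hadj'.ne h8.symm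
            · exact hn'ner0 h8
      · exact hd
    have hlt : (Y r' hr'C).card < (Y r0 hr0).card := by
      have hr'Y : r' ∈ Y r0 hr0 :=
        Finset.mem_filter.2 ⟨hr'C, end_mem_pathSet hT r0 r'⟩
      calc (Y r' hr'C).card ≤ ((Y r0 hr0).erase r').card := Finset.card_le_card hsub
        _ < (Y r0 hr0).card := Finset.card_erase_lt_of_mem hr'Y
    exact absurd (hmin ⟨r', hr'C⟩ (Finset.mem_attach _ _)) (not_le.2 hlt)

end CentroidExists

section Strategy
variable {V : Type*} [Fintype V] [Nonempty V]

/-- the chosen centroid -/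
noncomputable def cent (G : SimpleGraph V) (x : V → V → ℝ) (C : Finset V) : V :=
  if h : ∃ r, CentW G x C r then h.choose else Classical.arbitrary V

lemma cent_spec {G : SimpleGraph V} {x : V → V → ℝ} {C : Finset V}
    (h : ∃ r, CentW G x C r) : CentW G x C (cent G x C) := by
  rw [cent, dif_pos h]
  exact h.choose_spec

/-- recursive query set -/
noncomputable def QC (G : SimpleGraph V) (x : V → V → ℝ) (C : Finset V) (v : V) :
    Finset V :=
  if h : v ∈ C ∧ cent G x C ∈ C ∧ v ≠ cent G x C then
    insert (cent G x C) (QC G x (comp G (C.erase (cent G x C)) v) v)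
  else {v}
termination_by C.card
decreasing_by
  exact lt_of_le_of_lt (Finset.card_le_card comp_subset)
    (Finset.card_erase_lt_of_mem h.2.1)

lemma QC_subset {G : SimpleGraph V} {x : V → V → ℝ} (C : Finset V) (v : V)
    (hv : v ∈ C) : QC G x C v ⊆ C := by
  rw [QC]
  split_ifs with h
  · intro z hz
    rcases Finset.mem_insert.1 hz with hz | hz
    · rw [hz]; exact h.2.1
    · have hvc : v ∈ comp G (C.erase (cent G x C)) v :=
        mem_comp_self (Finset.mem_erase.2 ⟨h.2.2, h.1⟩)
      have := QC_subset (comp G (C.erase (cent G x C)) v) v hvc hz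
      exact Finset.mem_of_mem_erase (comp_subset this)
  · intro z hz
    rw [Finset.mem_singleton] at hz
    rw [hz]; exact hv
termination_by C.card
decreasing_by
  exact lt_of_le_of_lt (Finset.card_le_card comp_subset)
    (Finset.card_erase_lt_of_mem h.2.1)

lemma cent_mem_QC {G : SimpleGraph V} {x : V → V → ℝ} {C : Finset V} {v : V}
    (hv : v ∈ C) (hc : cent G x C ∈ C) : cent G x C ∈ QC G x C v := by
  rw [QC]
  split_ifs with h
  · exact Finset.mem_insert_self _ _
  · have : v = cent G x C := by
      by_contra hne
      exact h ⟨hv, hc, hne⟩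
    rw [Finset.mem_singleton, this]

end Strategy

section Main
variable {V : Type*} [Fintype V] [Nonempty V] {G : SimpleGraph V}
  {c : V → V → ℝ} {x : V → V → ℝ}

lemma QC_cost (hT : G.IsTree) (hc0 : ∀ u v, 0 ≤ c u v)
    (hmono : ∀ u v t : V, u ∈ pathSet G v t → c u t ≤ c v t)
    (hx0 : ∀ u v, 0 ≤ x u v)
    (hfeas : ∀ v w : V,
      1 ≤ ∑ u ∈ Finset.univ.filter (· ∈ pathSet G v w), min (x u v) (x u w))
    (C : Finset V) (v : V) (hC : ConnIn G C) (hne : C.Nonempty) (hv : v ∈ C) :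
    (∑ q ∈ QC G x C v, c q v) ≤ 2 * ∑ q ∈ C, c q v * x q v := by
  have hex : ∃ r, CentW G x C r := centroid_exists hT hx0 hfeas hC hne
  obtain ⟨hrC, hcw⟩ := cent_spec hex
  set r := cent G x C with hrdef
  -- the centroid bound : c r v ≤ 2 * sum over the far side
  have hcent : c r v ≤ 2 * ∑ q ∈ C.filter (fun q => r ∈ pathSet G v q), c q v * x q v := by
    have h2 := hcw v hv
    have hb : ∀ q ∈ C.filter (fun q => r ∈ pathSet G v q), c r v * x q v ≤ c q v * x q v := by
      intro q hq
      rw [Finset.mem_filter] at hq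
      have : r ∈ pathSet G q v := by rw [pathSet_symm hT]; exact hq.2
      exact mul_le_mul_of_nonneg_right (hmono r q v this) (hx0 q v)
    calc c r v = 2 * (c r v * (1/2)) := by ring
      _ ≤ 2 * (c r v * ∑ q ∈ C.filter (fun q => r ∈ pathSet G v q), x q v) := by
          have := mul_le_mul_of_nonneg_left h2 (hc0 r v)
          linarith
      _ = 2 * ∑ q ∈ C.filter (fun q => r ∈ pathSet G v q), c r v * x q v := by
          rw [Finset.mul_sum]
      _ ≤ 2 * ∑ q ∈ C.filter (fun q => r ∈ pathSet G v q), c q v * x q v := by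
          have := Finset.sum_le_sum hb
          linarith
  rw [QC]
  split_ifs with h
  · -- recursive case
    set S := C.erase r with hSdef
    set C' := comp G S v with hC'def
    have hvS : v ∈ S := Finset.mem_erase.2 ⟨h.2.2, h.1⟩
    have hvC' : v ∈ C' := mem_comp_self hvS
    have hC'conn : ConnIn G C' := connIn_comp
    have hC'ne : C'.Nonempty := ⟨v, hvC'⟩
    have hcard : C'.card < C.card :=
      lt_of_le_of_lt (Finset.card_le_card comp_subset) (Finset.card_erase_lt_of_mem hrC)
    have hrec := QC_cost hT hc0 hmono hx0 hfeas C' v hC'conn hC'ne hvC'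
    have hrnot : r ∉ QC G x C' v := by
      intro hcontra
      have := comp_subset (QC_subset C' v hvC' hcontra)
      exact (Finset.mem_erase.1 this).1 rfl
    rw [Finset.sum_insert hrnot]
    -- disjointness of far side and C'
    set B := C.filter (fun q => r ∈ pathSet G v q) with hBdef
    have hdisj : Disjoint B C' := by
      rw [Finset.disjoint_left]
      intro q hqB hqC'
      rw [hBdef, Finset.mem_filter] at hqB
      obtain ⟨-, w, hw⟩ := Finset.mem_filter.1 hqC'
      have hps : q ∈ w.bypass.support := by
        have : q ∈ pathSet G v q := end_mem_pathSet hT v q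
        rwa [mem_pathSet_iff hT ⟨w.bypass, w.bypass_isPath⟩] at this
      have hrps : r ∈ w.bypass.support := by
        have h2 := hqB.2
        rwa [mem_pathSet_iff hT ⟨w.bypass, w.bypass_isPath⟩] at h2
      have := hw r (w.support_bypass_subset hrps)
      exact (Finset.mem_erase.1 this).1 rfl
    have hunion : B ∪ C' ⊆ C := by
      intro q hq
      rcases Finset.mem_union.1 hq with hq | hq
      · exact (Finset.mem_filter.1 hq).1
      · exact Finset.mem_of_mem_erase (comp_subset hq)
    have hsum : ∑ q ∈ B, c q v * x q v + ∑ q ∈ C', c q v * x q v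
        ≤ ∑ q ∈ C, c q v * x q v := by
      rw [← Finset.sum_union hdisj]
      exact Finset.sum_le_sum_of_subset_of_nonneg hunion
        (fun q _ _ => mul_nonneg (hc0 q v) (hx0 q v))
    calc c r v + ∑ q ∈ QC G x C' v, c q v
        ≤ 2 * ∑ q ∈ B, c q v * x q v + 2 * ∑ q ∈ C', c q v * x q v := by
          exact add_le_add hcent hrec
      _ = 2 * (∑ q ∈ B, c q v * x q v + ∑ q ∈ C', c q v * x q v) := by ring
      _ ≤ 2 * ∑ q ∈ C, c q v * x q v := by linarith
  · -- v = r case (or degenerate)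
    have hvr : v = r := by
      by_contra hne'
      exact h ⟨hv, hrC, hne'⟩
    rw [Finset.sum_singleton]
    have hBC : C.filter (fun q => r ∈ pathSet G v q) ⊆ C := Finset.filter_subset _ _
    calc c v v = c r v := by rw [← hvr]
      _ ≤ 2 * ∑ q ∈ C.filter (fun q => r ∈ pathSet G v q), c q v * x q v := hcent
      _ ≤ 2 * ∑ q ∈ C, c q v * x q v := by
          have := Finset.sum_le_sum_of_subset_of_nonneg hBC
            (fun q _ _ => mul_nonneg (hc0 q v) (hx0 q v))
          linarith
termination_by C.card
decreasing_by
  exact lt_of_le_of_lt (Finset.card_le_card comp_subset)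
    (Finset.card_erase_lt_of_mem h.2.1)
end Main

section Pair
variable {V : Type*} [Fintype V] [Nonempty V] {G : SimpleGraph V} {x : V → V → ℝ}

lemma QC_pair (hT : G.IsTree) (hx0 : ∀ u v, 0 ≤ x u v)
    (hfeas : ∀ v w : V,
      1 ≤ ∑ u ∈ Finset.univ.filter (· ∈ pathSet G v w), min (x u v) (x u w))
    (C : Finset V) (u v : V) (hC : ConnIn G C) (hne : C.Nonempty)
    (hu : u ∈ C) (hv : v ∈ C) :
    ∃ q, q ∈ QC G x C u ∧ q ∈ QC G x C v ∧ q ∈ pathSet G u v := by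
  have hex : ∃ r, CentW G x C r := centroid_exists hT hx0 hfeas hC hne
  obtain ⟨hrC, -⟩ := cent_spec hex
  set r := cent G x C with hrdef
  by_cases hcase : r ∈ pathSet G u v
  · exact ⟨r, cent_mem_QC hu hrC, cent_mem_QC hv hrC, hcase⟩
  · have hur : u ≠ r := by
      intro h; exact hcase (h ▸ start_mem_pathSet hT u v)
    have hvr : v ≠ r := by
      intro h; exact hcase (h ▸ end_mem_pathSet hT u v)
    set S := C.erase r with hSdef
    set p := cpath hT u v with hpdef
    have hsupp : ∀ z ∈ (p : G.Walk u v).support, z ∈ S := by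
      intro z hz
      have hzp : z ∈ pathSet G u v := ⟨p, hz⟩
      refine Finset.mem_erase.2 ⟨?_, pathSet_subset_of_connIn hT hC hu hv hzp⟩
      intro hzr
      exact hcase (hzr ▸ hzp)
    have hcompeq : comp G S u = comp G S v := comp_eq_of_walk (p : G.Walk u v) hsupp
    set C' := comp G S v with hC'def
    have hvC' : v ∈ C' := mem_comp_self (hsupp v (p : G.Walk u v).end_mem_support)
    have huC' : u ∈ C' := by
      rw [← hcompeq]
      exact mem_comp_self (hsupp u (p : G.Walk u v).start_mem_support)
    have hrec := QC_pair hT hx0 hfeas C' u v connIn_comp ⟨v, hvC'⟩ huC' hvC'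
    obtain ⟨q, hq1, hq2, hq3⟩ := hrec
    refine ⟨q, ?_, ?_, hq3⟩
    · rw [QC]
      split_ifs with h
      · refine Finset.mem_insert.2 (Or.inr ?_)
        rw [show comp G (C.erase (cent G x C)) u = C' from by rw [← hrdef, ← hSdef, hcompeq]]
        exact hq1
      · exact absurd ⟨hu, hrC, hur⟩ h
    · rw [QC]
      split_ifs with h
      · exact Finset.mem_insert.2 (Or.inr hq2)
      · exact absurd ⟨hv, hrC, hvr⟩ h
termination_by C.card
decreasing_by
  exact lt_of_le_of_lt (Finset.card_le_card comp_subset)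
    (Finset.card_erase_lt_of_mem hrC)

end Pair

/-- A query assignment: (i) for all `u, v`, `Q(u) ∩ Q(v) ∩ P(u,v) ≠ ∅`, and
(ii) for every nonempty subset `U` inducing a connected subgraph, the sets
`Q(v)`, `v ∈ U`, have a common element. -/
def IsQueryAssignment {V : Type*} (G : SimpleGraph V) (Q : V → Finset V) : Prop :=
  (∀ u v : V, ∃ q : V, q ∈ Q u ∧ q ∈ Q v ∧ q ∈ pathSet G u v) ∧
  (∀ U : Set V, U.Nonempty → (G.induce U).Connected →
    ∃ r : V, ∀ v ∈ U, r ∈ Q v)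

/-- Given a finite tree, a cost function monotone non-decreasing with respect to
the target, and a feasible fractional LP solution `x`, there exists a query
assignment `Q` with `Σ_{q ∈ Q(v)} c(q,v) ≤ 2·Σ_u c(u,v)·x(u,v)` for every `v`;
in particular the weighted average-case cost and the worst-case cost of `Q` are
within a factor `2` of the corresponding LP objectives. -/
theorem stmt_15 {V : Type*} [Fintype V] [Nonempty V]
    (G : SimpleGraph V) (hT : G.IsTree)
    (c : V → V → ℝ) (hc0 : ∀ u v, 0 ≤ c u v)
    (hmono : ∀ u v t : V, u ∈ pathSet G v t → c u t ≤ c v t)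
    (x : V → V → ℝ) (hx0 : ∀ u v, 0 ≤ x u v) (hx1 : ∀ u v, x u v ≤ 1)
    (hfeas : ∀ v w : V,
      1 ≤ ∑ u ∈ Finset.univ.filter (· ∈ pathSet G v w), min (x u v) (x u w)) :
    ∃ Q : V → Finset V, IsQueryAssignment G Q ∧
      (∀ v : V, (∑ q ∈ Q v, c q v) ≤ 2 * ∑ u : V, c u v * x u v) ∧
      (∀ w : V → ℝ, (∀ v, 0 ≤ w v) →
        (∑ v : V, w v * ∑ q ∈ Q v, c q v) ≤
          2 * ∑ v : V, w v * ∑ u : V, c u v * x u v) ∧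
      (Finset.univ.sup' Finset.univ_nonempty (fun v => ∑ q ∈ Q v, c q v) ≤
        2 * Finset.univ.sup' Finset.univ_nonempty
          (fun v => ∑ u : V, c u v * x u v)) := by
  have hconn : ConnIn G (Finset.univ : Finset V) := by
    intro a _ b _
    obtain ⟨w⟩ := hT.isConnected a b
    exact ⟨w, fun z _ => Finset.mem_univ z⟩
  have hune : (Finset.univ : Finset V).Nonempty := Finset.univ_nonempty
  refine ⟨fun v => QC G x Finset.univ v, ⟨?_, ?_⟩, ?_, ?_, ?_⟩
  · intro u v
    exact QC_pair hT hx0 hfeas Finset.univ u v hconn hune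
      (Finset.mem_univ u) (Finset.mem_univ v)
  · intro U hU hUconn
    exact ⟨cent G x Finset.univ,
      fun v _ => cent_mem_QC (Finset.mem_univ v) (Finset.mem_univ _)⟩
  · intro v
    exact QC_cost hT hc0 hmono hx0 hfeas Finset.univ v hconn hune (Finset.mem_univ v)
  · intro w hw
    have hbound : ∀ v : V, (∑ q ∈ QC G x Finset.univ v, c q v) ≤ 2 * ∑ u : V, c u v * x u v :=
      fun v => QC_cost hT hc0 hmono hx0 hfeas Finset.univ v hconn hune (Finset.mem_univ v)
    calc ∑ v : V, w v * ∑ q ∈ QC G x Finset.univ v, c q v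
        ≤ ∑ v : V, w v * (2 * ∑ u : V, c u v * x u v) :=
          Finset.sum_le_sum (fun v _ => mul_le_mul_of_nonneg_left (hbound v) (hw v))
      _ = 2 * ∑ v : V, w v * ∑ u : V, c u v * x u v := by
          rw [Finset.mul_sum]; congr 1; ext v; ring
  · have hbound : ∀ v : V, (∑ q ∈ QC G x Finset.univ v, c q v) ≤ 2 * ∑ u : V, c u v * x u v :=
      fun v => QC_cost hT hc0 hmono hx0 hfeas Finset.univ v hconn hune (Finset.mem_univ v)
    refine Finset.sup'_le _ _ (fun v _ => ?_)
    refine le_trans (hbound v) ?_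
    have : (∑ u : V, c u v * x u v) ≤ Finset.univ.sup' Finset.univ_nonempty
        (fun v => ∑ u : V, c u v * x u v) :=
      Finset.le_sup' (f := fun v => ∑ u : V, c u v * x u v) (Finset.mem_univ v)
    linarith
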